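/- Let σ₁₁, σ₂₁, b₁₁, θ ∈ (0,∞), b₂₁ ∈ (−∞,0], κ₁, u₃ ∈ ℝ, u₄ ∈ (−∞,0], C₂ ∈ (0,∞) and C₃ ∈ [0,∞). Let K₁, K₂ : [0,∞) → ℂ be differentiable with Re K₁(t) ≤ 0 and |K₂(t)| ≤ C₃·e^{−C₂ t} for all t ≥ 0, and suppose K₁′(t) = (σ₁₁²/2)·K₁(t)² − b₁₁·K₁(t) − b₂₁·K₂(t) − i·u₃·κ₁·e^{−θt} + u₄·σ₂₁²·e^{−2θt} for all t ≥ 0. Then there exists a constant C ∈ [0,∞) such that |K₁(t)| ≤ C·e^{−min(C₂, θ, b₁₁/2)·t} for all t ≥ 0. -/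

import Mathlib

open MeasureTheory Filter Real Complex

private lemma hasDerivAt_exp_mul' (a t : ℝ) :
    HasDerivAt (fun s => Real.exp (a * s)) (a * Real.exp (a * t)) t := by
  simpa [mul_comm] using ((hasDerivAt_id t).const_mul a).exp

private lemma riccati_key_ineq (b σ nsq zr G ip x : ℝ) (hb : 0 < b) (hσ : 0 ≤ σ)
    (hzr : zr ≤ 0) (hnsq : 0 ≤ nsq) (hx2 : x ^ 2 = nsq) (hip : ip ≤ x * G) :
    3 * b / 2 * nsq + 2 * (σ / 2 * (nsq * zr) - b * nsq + ip) ≤ 2 / b * G ^ 2 := by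
  have hp : nsq * zr ≤ 0 := mul_nonpos_iff.mpr (Or.inl ⟨hnsq, hzr⟩)
  have hcube : σ / 2 * (nsq * zr) ≤ 0 := by nlinarith [hp, hσ]
  have hyoung : b / 2 * nsq + 2 / b * G ^ 2 - 2 * (x * G) = (b * x - 2 * G) ^ 2 / (2 * b) := by
    rw [← hx2]; field_simp; ring
  have hy2 : 0 ≤ (b * x - 2 * G) ^ 2 / (2 * b) := by positivity
  nlinarith [hcube, hyoung, hy2, hip]

theorem riccati_first_component_decay
    (σ11 σ21 b11 θ : ℝ)
    (hσ11 : 0 < σ11) (hσ21 : 0 < σ21) (hb11 : 0 < b11) (hθ : 0 < θ)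
    (b21 : ℝ) (hb21 : b21 ≤ 0)
    (κ1 u3 : ℝ) (u4 : ℝ) (hu4 : u4 ≤ 0)
    (C2 C3 : ℝ) (hC2 : 0 < C2) (hC3 : 0 ≤ C3)
    (K1 K2 : ℝ → ℂ)
    (hK1re : ∀ t, 0 ≤ t → (K1 t).re ≤ 0)
    (hK2bd : ∀ t, 0 ≤ t → ‖K2 t‖ ≤ C3 * Real.exp (-C2 * t))
    (hK1 : ∀ t, 0 ≤ t → HasDerivAt K1
      ((σ11 ^ 2 / 2 : ℂ) * K1 t ^ 2 - (b11 : ℂ) * K1 t - (b21 : ℂ) * K2 t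
        - Complex.I * (u3 : ℂ) * (κ1 : ℂ) * (Real.exp (-θ * t) : ℂ)
        + (u4 : ℂ) * (σ21 ^ 2 : ℂ) * (Real.exp (-2 * θ * t) : ℂ)) t) :
    ∃ C : ℝ, 0 ≤ C ∧ ∀ t, 0 ≤ t →
      ‖K1 t‖ ≤ C * Real.exp (-(min (min C2 θ) (b11 / 2)) * t) := by
  obtain ⟨lam, hlamdef⟩ : ∃ x : ℝ, x = min (min C2 θ) (b11 / 2) := ⟨_, rfl⟩
  rw [← hlamdef]
  obtain ⟨μ, hμdef⟩ : ∃ x : ℝ, x = min C2 θ := ⟨_, rfl⟩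
  have hμpos : 0 < μ := hμdef ▸ lt_min hC2 hθ
  have hμC2 : μ ≤ C2 := hμdef ▸ min_le_left _ _
  have hμθ : μ ≤ θ := hμdef ▸ min_le_right _ _
  have hlampos : 0 < lam := by rw [hlamdef, ← hμdef]; exact lt_min hμpos (by linarith)
  have hlamμ : lam ≤ μ := by rw [hlamdef, ← hμdef]; exact min_le_left _ _
  have hlamb : lam ≤ b11 / 2 := hlamdef ▸ min_le_right _ _
  obtain ⟨A, hAdef⟩ : ∃ x : ℝ, x = |b21| * C3 + |u3 * κ1| + |u4| * σ21 ^ 2 := ⟨_, rfl⟩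
  have hA0 : 0 ≤ A := by rw [hAdef]; positivity
  obtain ⟨a, hadef⟩ : ∃ x : ℝ, x = 3 * b11 / 2 := ⟨_, rfl⟩
  obtain ⟨ρ, hρdef⟩ : ∃ x : ℝ, x = 2 * lam := ⟨_, rfl⟩
  have hρμ : ρ ≤ 2 * μ := by rw [hρdef]; linarith
  have hρb : ρ ≤ b11 := by rw [hρdef]; linarith
  obtain ⟨δ, hδdef⟩ : ∃ x : ℝ, x = a - ρ := ⟨_, rfl⟩
  have hδpos : 0 < δ := by rw [hδdef, hadef]; linarith
  obtain ⟨c, hcdef⟩ : ∃ x : ℝ, x = 2 * A ^ 2 / (b11 * δ) := ⟨_, rfl⟩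
  have hc0 : 0 ≤ c := by
    rw [hcdef]
    exact div_nonneg (by positivity) (mul_nonneg hb11.le hδpos.le)
  obtain ⟨D, hDdef⟩ : ∃ f : ℝ → ℂ, f = fun t => (σ11 ^ 2 / 2 : ℂ) * K1 t ^ 2
      - (b11 : ℂ) * K1 t - (b21 : ℂ) * K2 t
      - Complex.I * (u3 : ℂ) * (κ1 : ℂ) * (Real.exp (-θ * t) : ℂ)
      + (u4 : ℂ) * (σ21 ^ 2 : ℂ) * (Real.exp (-2 * θ * t) : ℂ) := ⟨_, rfl⟩
  obtain ⟨R, hRdef⟩ : ∃ f : ℝ → ℂ, f = fun t => -((b21 : ℂ) * K2 t)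
      - Complex.I * (u3 : ℂ) * (κ1 : ℂ) * (Real.exp (-θ * t) : ℂ)
      + (u4 : ℂ) * (σ21 ^ 2 : ℂ) * (Real.exp (-2 * θ * t) : ℂ) := ⟨_, rfl⟩
  have hDR : ∀ t, D t = (σ11 ^ 2 / 2 : ℂ) * K1 t ^ 2 - (b11 : ℂ) * K1 t + R t := by
    intro t; simp only [hDdef, hRdef]; ring
  -- bound on the inhomogeneous part
  have hRbd : ∀ t, 0 ≤ t → ‖R t‖ ≤ A * Real.exp (-μ * t) := by
    intro t ht
    have e1 : Real.exp (-C2 * t) ≤ Real.exp (-μ * t) := by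
      apply Real.exp_le_exp.mpr; nlinarith
    have e2 : Real.exp (-θ * t) ≤ Real.exp (-μ * t) := by
      apply Real.exp_le_exp.mpr; nlinarith
    have e3 : Real.exp (-2 * θ * t) ≤ Real.exp (-μ * t) := by
      apply Real.exp_le_exp.mpr; nlinarith
    have h1 : ‖-((b21 : ℂ) * K2 t)‖ ≤ |b21| * (C3 * Real.exp (-C2 * t)) := by
      rw [norm_neg, norm_mul, Complex.norm_real, Real.norm_eq_abs]
      exact mul_le_mul_of_nonneg_left (hK2bd t ht) (abs_nonneg _)
    have h2 : ‖Complex.I * (u3 : ℂ) * (κ1 : ℂ) * (Real.exp (-θ * t) : ℂ)‖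
        = |u3 * κ1| * Real.exp (-θ * t) := by
      rw [norm_mul, norm_mul, norm_mul, Complex.norm_I, Complex.norm_real,
        Complex.norm_real, Complex.norm_real, Real.norm_eq_abs, Real.norm_eq_abs,
        Real.norm_eq_abs, Real.abs_exp, abs_mul]
      ring
    have h3 : ‖(u4 : ℂ) * (σ21 ^ 2 : ℂ) * (Real.exp (-2 * θ * t) : ℂ)‖
        = |u4| * σ21 ^ 2 * Real.exp (-2 * θ * t) := by
      rw [norm_mul, norm_mul, norm_pow, Complex.norm_real, Complex.norm_real,
        Complex.norm_real, Real.norm_eq_abs, Real.norm_eq_abs, Real.norm_eq_abs,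
        Real.abs_exp, _root_.sq_abs]
    rw [hRdef]
    calc ‖-((b21 : ℂ) * K2 t)
          - Complex.I * (u3 : ℂ) * (κ1 : ℂ) * (Real.exp (-θ * t) : ℂ)
          + (u4 : ℂ) * (σ21 ^ 2 : ℂ) * (Real.exp (-2 * θ * t) : ℂ)‖
        ≤ ‖-((b21 : ℂ) * K2 t)
          - Complex.I * (u3 : ℂ) * (κ1 : ℂ) * (Real.exp (-θ * t) : ℂ)‖
          + ‖(u4 : ℂ) * (σ21 ^ 2 : ℂ) * (Real.exp (-2 * θ * t) : ℂ)‖ :=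
        norm_add_le _ _
      _ ≤ ‖-((b21 : ℂ) * K2 t)‖
          + ‖Complex.I * (u3 : ℂ) * (κ1 : ℂ) * (Real.exp (-θ * t) : ℂ)‖
          + ‖(u4 : ℂ) * (σ21 ^ 2 : ℂ) * (Real.exp (-2 * θ * t) : ℂ)‖ := by
        have h := norm_sub_le (-((b21 : ℂ) * K2 t))
          (Complex.I * (u3 : ℂ) * (κ1 : ℂ) * (Real.exp (-θ * t) : ℂ))
        linarith
      _ ≤ |b21| * (C3 * Real.exp (-C2 * t)) + |u3 * κ1| * Real.exp (-θ * t)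
          + |u4| * σ21 ^ 2 * Real.exp (-2 * θ * t) := by
        rw [h2, h3]; linarith
      _ ≤ |b21| * C3 * Real.exp (-μ * t) + |u3 * κ1| * Real.exp (-μ * t)
          + |u4| * σ21 ^ 2 * Real.exp (-μ * t) := by
        have b1 : |b21| * (C3 * Real.exp (-C2 * t)) ≤ |b21| * C3 * Real.exp (-μ * t) := by
          rw [← mul_assoc]
          exact mul_le_mul_of_nonneg_left e1 (by positivity)
        have b2 : |u3 * κ1| * Real.exp (-θ * t) ≤ |u3 * κ1| * Real.exp (-μ * t) :=
          mul_le_mul_of_nonneg_left e2 (abs_nonneg _)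
        have b3 : |u4| * σ21 ^ 2 * Real.exp (-2 * θ * t)
            ≤ |u4| * σ21 ^ 2 * Real.exp (-μ * t) :=
          mul_le_mul_of_nonneg_left e3 (by positivity)
        linarith
      _ = A * Real.exp (-μ * t) := by rw [hAdef]; ring
  -- the energy function
  obtain ⟨φ, hφdef⟩ : ∃ f : ℝ → ℝ, f = fun t => ‖K1 t‖ ^ 2 := ⟨_, rfl⟩
  have hφ0 : ∀ t, 0 ≤ φ t := fun t => by rw [hφdef]; positivity
  have hφder : ∀ t, 0 ≤ t →
      HasDerivAt φ (2 * (inner ℝ (K1 t) (D t) : ℝ)) t := by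
    intro t ht
    have h := (hK1 t ht).norm_sq
    simp only [hφdef, hDdef]
    exact h
  -- the key differential inequality
  have key : ∀ t, 0 ≤ t →
      a * φ t + 2 * (inner ℝ (K1 t) (D t) : ℝ)
        ≤ 2 / b11 * (A * Real.exp (-μ * t)) ^ 2 := by
    intro t ht
    obtain ⟨z, hzdef⟩ : ∃ z : ℂ, z = K1 t := ⟨_, rfl⟩
    rw [← hzdef]
    have hcm : (starRingEnd ℂ) z * ((σ11 ^ 2 / 2 : ℂ) * z ^ 2 - (b11 : ℂ) * z + R t)
        = ((σ11 ^ 2 / 2 : ℝ) : ℂ) * ((Complex.normSq z : ℂ) * z)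
          - ((b11 : ℝ) : ℂ) * (Complex.normSq z : ℂ) + (starRingEnd ℂ) z * R t := by
      rw [Complex.normSq_eq_conj_mul_self]
      push_cast
      ring
    have hsplit : (inner ℝ z (D t) : ℝ)
        = σ11 ^ 2 / 2 * (Complex.normSq z * z.re) - b11 * Complex.normSq z
          + (inner ℝ z (R t) : ℝ) := by
      rw [hDR t, ← hzdef, Complex.inner, Complex.inner, mul_comm _ ((starRingEnd ℂ) z), hcm,
        mul_comm ((starRingEnd ℂ) z) (R t)]
      simp only [Complex.add_re, Complex.sub_re, Complex.re_ofReal_mul, Complex.ofReal_re]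
    have hip : (inner ℝ z (R t) : ℝ) ≤ ‖z‖ * (A * Real.exp (-μ * t)) :=
      le_trans (real_inner_le_norm z (R t))
        (mul_le_mul_of_nonneg_left (hRbd t ht) (norm_nonneg _))
    have hzre : z.re ≤ 0 := by rw [hzdef]; exact hK1re t ht
    have hns : ‖z‖ ^ 2 = Complex.normSq z := by
      rw [Complex.sq_norm]
    have hφt : φ t = Complex.normSq z := by rw [hφdef, ← hns, hzdef]
    have hnsq0 : 0 ≤ Complex.normSq z := Complex.normSq_nonneg z
    rw [hsplit, hφt, hadef]
    exact riccati_key_ineq b11 (σ11 ^ 2) (Complex.normSq z) z.re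
      (A * Real.exp (-μ * t)) (inner ℝ z (R t)) ‖z‖ hb11 (by positivity) hzre hnsq0 hns hip
  -- the comparison function
  obtain ⟨F, hFdef⟩ : ∃ f : ℝ → ℝ,
      f = fun t => Real.exp (a * t) * φ t - c * Real.exp (δ * t) := ⟨_, rfl⟩
  have hFder : ∀ t, 0 ≤ t → HasDerivAt F
      (Real.exp (a * t) * (a * φ t + 2 * (inner ℝ (K1 t) (D t) : ℝ))
        - c * δ * Real.exp (δ * t)) t := by
    intro t ht
    have h1 := (hasDerivAt_exp_mul' a t).mul (hφder t ht)
    have h2 := (hasDerivAt_exp_mul' δ t).const_mul c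
    have h3 := h1.sub h2
    rw [hFdef]
    convert h3 using 1
    case e'_9 => ring
    all_goals rfl
  have hFanti : AntitoneOn F (Set.Ici (0 : ℝ)) := by
    apply antitoneOn_of_deriv_nonpos (convex_Ici 0)
    · intro x hx
      exact (hFder x hx).continuousAt.continuousWithinAt
    · intro x hx
      rw [interior_Ici] at hx
      exact (hFder x (le_of_lt hx)).differentiableAt.differentiableWithinAt
    · intro x hx
      rw [interior_Ici] at hx
      have hx0 : (0 : ℝ) ≤ x := le_of_lt hx
      rw [(hFder x hx0).deriv]
      have hk := key x hx0
      have hexp1 : (0 : ℝ) ≤ Real.exp (a * x) := (Real.exp_pos _).le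
      have h5 : Real.exp (a * x) * (a * φ x + 2 * (inner ℝ (K1 x) (D x) : ℝ))
          ≤ Real.exp (a * x) * (2 / b11 * (A * Real.exp (-μ * x)) ^ 2) :=
        mul_le_mul_of_nonneg_left hk hexp1
      have h9 : Real.exp (a * x) * (2 / b11 * (A * Real.exp (-μ * x)) ^ 2)
          = 2 * A ^ 2 / b11 * (Real.exp (a * x) * Real.exp (-μ * x) * Real.exp (-μ * x)) := by
        ring
      have h10 : Real.exp (a * x) * Real.exp (-μ * x) * Real.exp (-μ * x)
          = Real.exp ((a - 2 * μ) * x) := by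
        rw [← Real.exp_add, ← Real.exp_add]
        congr 1
        ring
      have h7 : Real.exp ((a - 2 * μ) * x) ≤ Real.exp (δ * x) :=
        Real.exp_le_exp.mpr (mul_le_mul_of_nonneg_right (by rw [hδdef]; linarith) hx0)
      have h8 : c * δ = 2 * A ^ 2 / b11 := by
        rw [hcdef]
        field_simp
      have h11 : 2 * A ^ 2 / b11 * Real.exp ((a - 2 * μ) * x)
          ≤ 2 * A ^ 2 / b11 * Real.exp (δ * x) :=
        mul_le_mul_of_nonneg_left h7 (by positivity)
      rw [h9, h10] at h5
      rw [h8]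
      linarith
  have hFle : ∀ t, 0 ≤ t → F t ≤ F 0 := fun t ht =>
    hFanti Set.self_mem_Ici ht ht
  have hF0 : F 0 = φ 0 - c := by
    simp [hFdef]
  have hφbd : ∀ t, 0 ≤ t → φ t ≤ (φ 0 + c) * Real.exp (-ρ * t) := by
    intro t ht
    have h := hFle t ht
    rw [hF0] at h
    simp only [hFdef] at h
    have hexpδ : (1 : ℝ) ≤ Real.exp (δ * t) := Real.one_le_exp (mul_nonneg hδpos.le ht)
    have hφ00 : 0 ≤ φ 0 := hφ0 0
    have hterm : φ 0 ≤ φ 0 * Real.exp (δ * t) := le_mul_of_one_le_right hφ00 hexpδ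
    have h1 : Real.exp (a * t) * φ t ≤ (φ 0 + c) * Real.exp (δ * t) := by
      have hexpand : (φ 0 + c) * Real.exp (δ * t)
          = φ 0 * Real.exp (δ * t) + c * Real.exp (δ * t) := by ring
      rw [hexpand]
      linarith [h, hterm, hc0]
    have h2 := mul_le_mul_of_nonneg_left h1 (Real.exp_pos (-(a * t))).le
    calc φ t = Real.exp (-(a * t)) * (Real.exp (a * t) * φ t) := by
          rw [← mul_assoc, ← Real.exp_add]
          simp
      _ ≤ Real.exp (-(a * t)) * ((φ 0 + c) * Real.exp (δ * t)) := h2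
      _ = (φ 0 + c) * Real.exp (-ρ * t) := by
          rw [show Real.exp (-(a * t)) * ((φ 0 + c) * Real.exp (δ * t))
              = (φ 0 + c) * (Real.exp (-(a * t)) * Real.exp (δ * t)) by ring,
            ← Real.exp_add]
          congr 2
          rw [hδdef]
          ring
  refine ⟨Real.sqrt (φ 0 + c), Real.sqrt_nonneg _, ?_⟩
  intro t ht
  have hsum0 : 0 ≤ φ 0 + c := by linarith [hφ0 0]
  have hφt' : φ t = ‖K1 t‖ ^ 2 := by simp only [hφdef]
  have hsq : ‖K1 t‖ ^ 2 ≤ (Real.sqrt (φ 0 + c) * Real.exp (-lam * t)) ^ 2 := by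
    rw [← hφt']
    have heq : (Real.sqrt (φ 0 + c) * Real.exp (-lam * t)) ^ 2
        = (φ 0 + c) * Real.exp (-ρ * t) := by
      rw [mul_pow, Real.sq_sqrt hsum0]
      congr 1
      rw [pow_two, ← Real.exp_add]
      congr 1
      rw [hρdef]
      ring
    rw [heq]
    exact hφbd t ht
  have h1 : ‖K1 t‖ = ‖K1 t‖ := rfl
  rw [h1]
  calc ‖K1 t‖ = Real.sqrt (‖K1 t‖ ^ 2) := (Real.sqrt_sq (norm_nonneg _)).symm
    _ ≤ Real.sqrt ((Real.sqrt (φ 0 + c) * Real.exp (-lam * t)) ^ 2) :=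
      Real.sqrt_le_sqrt hsq
    _ = Real.sqrt (φ 0 + c) * Real.exp (-lam * t) := Real.sqrt_sq (by positivity)
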